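/- Non-identifiability of the third tensor factor: Let r ≥ 1 and d = 2r. Define A¹ = A² = A³ ∈ ℝ^{d×r} as the matrix whose top r×r block is the identity and whose remaining rows are zero; let Y ∈ ℝ^d have all coordinates equal to 1/√d; let Z₁ ∈ ℝ^d have its first r coordinates equal to 1/√r and the rest zero; let Z₂ ∈ ℝ^d have all coordinates 1/√d; let C³ ∈ ℝ^{(r+1)×r} be the lower bidiagonal matrix with entries 1/√2 on the main diagonal and on the diagonal immediately below it, and B³ ∈ ℝ^{d×r} the matrix whose top (r+1)×r block is C³ and whose remaining rows are zero. Then for every X ∈ ℝ^d, Σ_{s=1}^r (XᵀA¹_s)(YᵀA²_s)(Z₁ᵀA³_s) = Σ_{s=1}^r (XᵀA¹_s)(YᵀA²_s)(Z₂ᵀB³_s) = (√2/d)·Σ_{i=1}^r X_i; moreover ‖A³ − B³‖_F² = r((1 − 1/√2)² + 1/2) ≥ r/2 and ‖A³⊥ᵀ B³‖_op = 1/√2, where A³⊥ is an orthonormal basis of the orthogonal complement of the column span of A³. Hence two rank-r tensors with identical first two factors and identical observed task feature produce identical noiseless responses while their third factors are far apart in both Frobenius norm and sin-θ distance. -/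
import Mathlib


open MeasureTheory ProbabilityTheory Matrix Real

noncomputable section

/-- Euclidean (ℓ²) norm of a finite family of reals. -/
def l2norm {ι : Type*} [Fintype ι] (x : ι → ℝ) : ℝ := Real.sqrt (∑ i, x i ^ 2)

/-- Frobenius norm of a matrix. -/
def fnorm {ι κ : Type*} [Fintype ι] [Fintype κ] (M : Matrix ι κ ℝ) : ℝ :=
  Real.sqrt (∑ i, ∑ j, M i j ^ 2)

/-- Operator (spectral) norm of a matrix. -/
def opNorm {ι κ : Type*} [Fintype ι] [Fintype κ] (M : Matrix ι κ ℝ) : ℝ :=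
  sSup {t | ∃ x : κ → ℝ, l2norm x = 1 ∧ t = l2norm (M.mulVec x)}

/-- Sum of an indicator-type family picks out one value. -/
lemma aux_single {d : ℕ} (n : ℕ) (hn : n < d) (f : Fin d → ℝ) :
    ∑ i : Fin d, (if (i : ℕ) = n then f i else 0) = f ⟨n, hn⟩ := by
  have h : ∀ i : Fin d, ((i : ℕ) = n) = (i = ⟨n, hn⟩) := by
    intro i; simp [Fin.ext_iff]
  simp only [h]
  simp

lemma aux_restrict (r : ℕ) (X : Fin (2*r) → ℝ) (h : r ≤ 2*r) :
    ∑ i : Fin (2*r), (if (i : ℕ) < r then X i else 0)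
      = ∑ s : Fin r, X (Fin.castLE h s) := by
  rw [← Finset.sum_filter]
  refine Finset.sum_nbij' (fun i => if hi : (i:ℕ) < r then (⟨(i:ℕ), hi⟩ : Fin r) else ⟨0, by omega⟩)
    (fun s => Fin.castLE h s) ?_ ?_ ?_ ?_ ?_
  · intro a _; simp
  · intro a _; simp [a.2]
  · intro a ha; simp at ha; simp [ha, Fin.ext_iff]
  · intro a _; simp [a.2, Fin.ext_iff]
  · intro a ha; simp at ha; simp [ha, Fin.ext_iff]

/-- Non-identifiability of the third tensor factor.  Here `d = 2r`,
`A¹ = A² = A³ = A` has identity top block, `B3` has the bidiagonal top block `C³`,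
`Y, Z₁, Z₂` are as in the construction, and `(I - A Aᵀ) B3 = A⊥ (A⊥ᵀ B3)` so that
`‖(I - A Aᵀ) B3‖_op = ‖A⊥ᵀ B3‖_op` is the sin-θ distance. -/
theorem nonidentifiability_of_third_factor (r : ℕ) (hr : 1 ≤ r) :
    ∀ (d : ℕ), d = 2 * r →
    ∀ (A B3 : Matrix (Fin d) (Fin r) ℝ) (Y Z₁ Z₂ : Fin d → ℝ),
    (∀ i s, A i s = if (i : ℕ) = (s : ℕ) then 1 else 0) →
    (∀ i, Y i = 1 / Real.sqrt d) →
    (∀ i, Z₁ i = if (i : ℕ) < r then 1 / Real.sqrt r else 0) →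
    (∀ i, Z₂ i = 1 / Real.sqrt d) →
    (∀ i s, B3 i s =
      if (i : ℕ) = (s : ℕ) ∨ (i : ℕ) = (s : ℕ) + 1 then 1 / Real.sqrt 2 else 0) →
    (∀ X : Fin d → ℝ,
      (∑ s : Fin r, (∑ i, X i * A i s) * (∑ j, Y j * A j s) * (∑ k, Z₁ k * A k s)
          = (Real.sqrt 2 / d) * ∑ i : Fin d, (if (i : ℕ) < r then X i else 0)) ∧
      (∑ s : Fin r, (∑ i, X i * A i s) * (∑ j, Y j * A j s) * (∑ k, Z₂ k * B3 k s)
          = (Real.sqrt 2 / d) * ∑ i : Fin d, (if (i : ℕ) < r then X i else 0))) ∧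
    fnorm (A - B3) ^ 2 = r * ((1 - 1 / Real.sqrt 2) ^ 2 + 1 / 2) ∧
    (r : ℝ) / 2 ≤ fnorm (A - B3) ^ 2 ∧
    opNorm ((1 - A * Aᵀ) * B3) = 1 / Real.sqrt 2 := by
  intro d hd
  subst hd
  intro A B3 Y Z₁ Z₂ hA hY hZ₁ hZ₂ hB3
  have hle : r ≤ 2 * r := by omega
  have hrpos : (0:ℝ) < r := by exact_mod_cast hr
  have hcast : ((2*r : ℕ) : ℝ) = 2 * (r:ℝ) := by push_cast; ring
  set c2 := Real.sqrt 2 with hc2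
  have hc2pos : 0 < c2 := Real.sqrt_pos.mpr (by norm_num)
  have hc2sq : c2 ^ 2 = 2 := Real.sq_sqrt (by norm_num)
  set cr := Real.sqrt r with hcr
  have hcrpos : 0 < cr := Real.sqrt_pos.mpr hrpos
  have hcrsq : cr ^ 2 = r := Real.sq_sqrt (le_of_lt hrpos)
  have hsd : Real.sqrt ((2*r : ℕ) : ℝ) = c2 * cr := by
    rw [hcast, Real.sqrt_mul (by norm_num) (r:ℝ)]
  -- basic column sums
  have hSX : ∀ (X : Fin (2*r) → ℝ) (s : Fin r),
      ∑ i, X i * A i s = X (Fin.castLE hle s) := by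
    intro X s
    simp only [hA, mul_ite, mul_one, mul_zero]
    exact aux_single (s:ℕ) (by omega) X
  have hSY : ∀ s : Fin r, ∑ j, Y j * A j s = 1 / (c2 * cr) := by
    intro s
    rw [hSX Y s, hY, hsd]
  have hSZ1 : ∀ s : Fin r, ∑ k, Z₁ k * A k s = 1 / cr := by
    intro s
    rw [hSX Z₁ s, hZ₁]
    simp [s.2]
  have hSZ2B : ∀ s : Fin r, ∑ k, Z₂ k * B3 k s = (1 / (c2 * cr)) * (1/c2 + 1/c2) := by
    intro s
    simp only [hZ₂, hB3, hsd]
    rw [← Finset.mul_sum]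
    congr 1
    have split : ∀ k : Fin (2*r),
        (if (k:ℕ) = (s:ℕ) ∨ (k:ℕ) = (s:ℕ)+1 then (1/c2 : ℝ) else 0)
          = (if (k:ℕ) = (s:ℕ) then (1/c2 : ℝ) else 0)
            + (if (k:ℕ) = (s:ℕ)+1 then (1/c2 : ℝ) else 0) := by
      intro k
      by_cases h1 : (k:ℕ) = (s:ℕ)
      · have h2 : ¬ ((k:ℕ) = (s:ℕ)+1) := by omega
        simp [h1, h2]
      · by_cases h2 : (k:ℕ) = (s:ℕ)+1 <;> simp [h1, h2]
    rw [Finset.sum_congr rfl fun k _ => split k, Finset.sum_add_distrib,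
      aux_single (s:ℕ) (by omega) (fun _ => (1/c2 : ℝ)),
      aux_single ((s:ℕ)+1) (by have := s.2; omega) (fun _ => (1/c2 : ℝ))]
  refine ⟨?_, ?_, ?_, ?_⟩
  · -- part 1
    intro X
    have hsum := aux_restrict r X hle
    constructor
    · rw [hsum, Finset.mul_sum]
      refine Finset.sum_congr rfl (fun s _ => ?_)
      rw [hSX X s, hSY s, hSZ1 s, hcast]
      have const1 : (1/(c2*cr)) * (1/cr) = c2/(2*(r:ℝ)) := by
        have hne2 : c2 ≠ 0 := ne_of_gt hc2pos
        have hner : cr ≠ 0 := ne_of_gt hcrpos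
        have hR : (r:ℝ) ≠ 0 := ne_of_gt hrpos
        field_simp
        linear_combination (-cr^2) * hc2sq + (-2) * hcrsq
      rw [mul_assoc, const1]
      ring
    · rw [hsum, Finset.mul_sum]
      refine Finset.sum_congr rfl (fun s _ => ?_)
      rw [hSX X s, hSY s, hSZ2B s, hcast]
      have const2 : (1/(c2*cr)) * ((1/(c2*cr)) * (1/c2 + 1/c2)) = c2/(2*(r:ℝ)) := by
        have hne2 : c2 ≠ 0 := ne_of_gt hc2pos
        have hner : cr ≠ 0 := ne_of_gt hcrpos
        have hR : (r:ℝ) ≠ 0 := ne_of_gt hrpos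
        field_simp
        linear_combination (-(c2^2+2)*cr^2)*hc2sq + (-4)*hcrsq
      rw [mul_assoc, const2]
      ring
  · -- part 2 : Frobenius norm
    rw [fnorm, Real.sq_sqrt (by positivity)]
    have entry : ∀ (i : Fin (2*r)) (s : Fin r),
        ((A - B3) i s) ^ 2
          = (if (i:ℕ) = (s:ℕ) then (1 - 1/c2)^2 else 0)
            + (if (i:ℕ) = (s:ℕ)+1 then (1/c2)^2 else 0) := by
      intro i s
      rw [Matrix.sub_apply, hA, hB3]
      by_cases h1 : (i:ℕ) = (s:ℕ)
      · have h2 : ¬ ((i:ℕ) = (s:ℕ)+1) := by omega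
        simp [h1, h2]
      · by_cases h2 : (i:ℕ) = (s:ℕ)+1 <;> simp [h1, h2]
    rw [Finset.sum_comm]
    have col : ∀ s : Fin r,
        ∑ i : Fin (2*r), ((A - B3) i s) ^ 2 = (1 - 1/c2)^2 + (1/c2)^2 := by
      intro s
      rw [Finset.sum_congr rfl fun i _ => entry i s, Finset.sum_add_distrib,
        aux_single (s:ℕ) (by omega) (fun _ => (1 - 1/c2)^2),
        aux_single ((s:ℕ)+1) (by have := s.2; omega) (fun _ => (1/c2)^2)]
    rw [Finset.sum_congr rfl fun s _ => col s, Finset.sum_const, Finset.card_univ,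
      Fintype.card_fin, nsmul_eq_mul]
    congr 1
    rw [div_pow, one_pow, hc2sq]
  · -- part 3 : lower bound
    rw [fnorm, Real.sq_sqrt (by positivity)]
    have entry : ∀ (i : Fin (2*r)) (s : Fin r),
        ((A - B3) i s) ^ 2
          = (if (i:ℕ) = (s:ℕ) then (1 - 1/c2)^2 else 0)
            + (if (i:ℕ) = (s:ℕ)+1 then (1/c2)^2 else 0) := by
      intro i s
      rw [Matrix.sub_apply, hA, hB3]
      by_cases h1 : (i:ℕ) = (s:ℕ)
      · have h2 : ¬ ((i:ℕ) = (s:ℕ)+1) := by omega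
        simp [h1, h2]
      · by_cases h2 : (i:ℕ) = (s:ℕ)+1 <;> simp [h1, h2]
    rw [Finset.sum_comm]
    have col : ∀ s : Fin r,
        ∑ i : Fin (2*r), ((A - B3) i s) ^ 2 = (1 - 1/c2)^2 + (1/c2)^2 := by
      intro s
      rw [Finset.sum_congr rfl fun i _ => entry i s, Finset.sum_add_distrib,
        aux_single (s:ℕ) (by omega) (fun _ => (1 - 1/c2)^2),
        aux_single ((s:ℕ)+1) (by have := s.2; omega) (fun _ => (1/c2)^2)]
    rw [Finset.sum_congr rfl fun s _ => col s, Finset.sum_const, Finset.card_univ,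
      Fintype.card_fin, nsmul_eq_mul]
    have hc : (1/c2)^2 = 1/2 := by rw [div_pow, one_pow, hc2sq]
    nlinarith [sq_nonneg (1 - 1/c2), hrpos]
  · -- part 4 : operator norm of the residual
    set M := (1 - A * Aᵀ) * B3 with hMdef
    have hAAT : ∀ i j : Fin (2*r),
        (A * Aᵀ) i j = if i = j ∧ (i:ℕ) < r then 1 else 0 := by
      intro i j
      rw [Matrix.mul_apply]
      simp only [Matrix.transpose_apply, hA]
      by_cases hij : i = j ∧ (i:ℕ) < r
      · obtain ⟨rfl, hi⟩ := hij
        rw [if_pos ⟨rfl, hi⟩]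
        have step : ∀ t : Fin r,
            ((if (i:ℕ) = (t:ℕ) then (1:ℝ) else 0) * (if (i:ℕ) = (t:ℕ) then (1:ℝ) else 0))
              = if (t:ℕ) = (i:ℕ) then (1:ℝ) else 0 := by
          intro t
          by_cases h : (i:ℕ) = (t:ℕ) <;> simp [h, eq_comm]
        rw [Finset.sum_congr rfl fun t _ => step t, aux_single (i:ℕ) hi (fun _ => (1:ℝ))]
      · rw [if_neg hij]
        apply Finset.sum_eq_zero
        intro t _
        by_cases h1 : (i:ℕ) = (t:ℕ)
        · have h2 : ¬ ((j:ℕ) = (t:ℕ)) := by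
            intro h2
            exact hij ⟨Fin.ext (by omega), by omega⟩
          simp [h2]
        · simp [h1]
    have hM : ∀ (i : Fin (2*r)) (s : Fin r),
        M i s = if (i:ℕ) = r ∧ (s:ℕ)+1 = r then 1/c2 else 0 := by
      intro i s
      rw [hMdef, Matrix.sub_mul, Matrix.one_mul, Matrix.sub_apply, Matrix.mul_apply]
      simp only [hAAT]
      have hsum : ∑ j : Fin (2*r), (if i = j ∧ (i:ℕ) < r then (1:ℝ) else 0) * B3 j s
          = if (i:ℕ) < r then B3 i s else 0 := by
        by_cases hi : (i:ℕ) < r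
        · simp only [hi, and_true, ite_mul, one_mul, zero_mul]
          rw [Finset.sum_ite_eq]
          simp [hi]
        · simp [hi]
      rw [hsum]
      by_cases hi : (i:ℕ) < r
      · rw [if_pos hi, sub_self, eq_comm, if_neg (by omega)]
      · rw [if_neg hi, sub_zero, hB3]
        have hcond : ((i:ℕ) = (s:ℕ) ∨ (i:ℕ) = (s:ℕ)+1) ↔ ((i:ℕ) = r ∧ (s:ℕ)+1 = r) := by
          have hs := s.2
          omega
        rw [if_congr hcond rfl rfl]
    have hrlt : r < 2*r := by omega
    set j0 : Fin r := ⟨r - 1, by omega⟩ with hj0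
    have hMv : ∀ (x : Fin r → ℝ) (i : Fin (2*r)),
        M.mulVec x i = if (i:ℕ) = r then (1/c2) * x j0 else 0 := by
      intro x i
      simp only [Matrix.mulVec, dotProduct, hM]
      by_cases hi : (i:ℕ) = r
      · simp only [hi, true_and, ite_mul, zero_mul]
        have hiff : ∀ s : Fin r, ((s:ℕ)+1 = r) ↔ (s = j0) := by
          intro s
          have hs := s.2
          simp only [hj0, Fin.ext_iff]
          omega
        simp only [hiff]
        rw [Finset.sum_ite_eq']
        simp
      · simp [hi]
    have hl2 : ∀ x : Fin r → ℝ, l2norm (M.mulVec x) = (1/c2) * |x j0| := by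
      intro x
      rw [l2norm]
      have step : ∀ i : Fin (2*r), (M.mulVec x i)^2
          = if (i:ℕ) = r then ((1/c2) * x j0)^2 else 0 := by
        intro i
        rw [hMv]
        split_ifs <;> simp
      rw [Finset.sum_congr rfl fun i _ => step i,
        aux_single r hrlt (fun _ => ((1/c2) * x j0)^2), Real.sqrt_sq_eq_abs, abs_mul,
        abs_of_pos (by positivity : (0:ℝ) < 1/c2)]
    have hgreat : IsGreatest
        {t | ∃ x : Fin r → ℝ, l2norm x = 1 ∧ t = l2norm (M.mulVec x)} (1/c2) := by
      constructor
      · refine ⟨fun k => if k = j0 then 1 else 0, ?_, ?_⟩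
        · rw [l2norm]
          have : ∀ k : Fin r, ((if k = j0 then (1:ℝ) else 0))^2
              = if k = j0 then (1:ℝ) else 0 := by
            intro k; split_ifs <;> simp
          rw [Finset.sum_congr rfl fun k _ => this k, Finset.sum_ite_eq',
            if_pos (Finset.mem_univ j0), Real.sqrt_one]
        · rw [hl2]; simp
      · rintro t ⟨x, hx1, rfl⟩
        rw [hl2]
        have habs : |x j0| ≤ 1 := by
          have h1 : x j0 ^ 2 ≤ ∑ k, x k ^ 2 :=
            Finset.single_le_sum (fun k _ => sq_nonneg (x k)) (Finset.mem_univ j0)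
          calc |x j0| = Real.sqrt (x j0 ^ 2) := (Real.sqrt_sq_eq_abs _).symm
            _ ≤ Real.sqrt (∑ k, x k ^ 2) := Real.sqrt_le_sqrt h1
            _ = 1 := hx1
        calc (1/c2) * |x j0| ≤ (1/c2) * 1 :=
              mul_le_mul_of_nonneg_left habs (by positivity)
          _ = 1/c2 := mul_one _
    rw [opNorm]
    exact hgreat.csSup_eq
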